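/- If nonzero real polynomials f and g belong to the same Hillar class, then their Mahler measures are equal: M(f) = M(g). -/

import Mathlib

open Polynomial

/-- The Mahler measure of a real polynomial: `|a| · ∏ max(1,|αᵢ|)` over the complex
roots `αᵢ` (with multiplicity), where `a` is the leading coefficient. -/
noncomputable def mahlerMeasure (f : Polynomial ℝ) : ℝ :=
  ‖(f.map (algebraMap ℝ ℂ)).leadingCoeff‖ *
    (((f.map (algebraMap ℝ ℂ)).roots).map (fun α => max 1 ‖α‖)).prod

noncomputable def Mc (p : Polynomial ℂ) : ℝ :=
  ‖p.leadingCoeff‖ * ((p.roots).map (fun α => max 1 (‖α‖))).prod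

lemma Mc_mul {p q : Polynomial ℂ} (hp : p ≠ 0) (hq : q ≠ 0) :
    Mc (p * q) = Mc p * Mc q := by
  unfold Mc
  rw [roots_mul (mul_ne_zero hp hq), leadingCoeff_mul, norm_mul, Multiset.map_add,
    Multiset.prod_add]
  ring

lemma Mc_C (a : ℂ) : Mc (C a) = ‖a‖ := by
  simp [Mc]

lemma reverse_one : (1 : Polynomial ℂ).reverse = 1 := by
  simpa using reverse_C (1 : ℂ)

lemma Mc_X_pow (k : ℕ) : Mc (X ^ k : Polynomial ℂ) = 1 := by
  simp [Mc, roots_X_pow, Multiset.nsmul_singleton, Multiset.map_replicate,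
    Multiset.prod_replicate]

lemma Mc_X_sub_C (α : ℂ) : Mc (X - C α) = max 1 (‖α‖) := by
  simp [Mc, roots_X_sub_C, (monic_X_sub_C α).leadingCoeff]

lemma reverse_X_sub_C (α : ℂ) : (X - C α).reverse = 1 - C α * X := by
  have h : (X - C α) = X + C (-α) := by ring_nf; rw [map_neg]; ring
  rw [h, reverse_add_C]
  have hX : (X : Polynomial ℂ).reverse = 1 := by
    rw [← one_mul (X : Polynomial ℂ), reverse_mul_X, reverse_one]
  rw [hX]
  simp [natDegree_X]
  ring

lemma Mc_reverse_X_sub_C (α : ℂ) : Mc (X - C α).reverse = max 1 (‖α‖) := by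
  rw [reverse_X_sub_C]
  rcases eq_or_ne α 0 with rfl | hα
  · simp [Mc]
  · have h : (1 - C α * X : Polynomial ℂ) = C (-α) * (X - C α⁻¹) := by
      have h1 : (-α) * α⁻¹ = -1 := by field_simp
      rw [mul_sub, ← C_mul, h1]
      simp only [map_neg, map_one]
      ring
    have h0 : 0 < ‖α‖ := norm_pos_iff.mpr hα
    rw [h, Mc_mul (by simpa using hα) (X_sub_C_ne_zero _), Mc_C, Mc_X_sub_C]
    rw [norm_neg, norm_inv]
    rcases le_total (‖α‖) 1 with hle | hle
    · have h1 : (1 : ℝ) ≤ (‖α‖)⁻¹ := by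
        rw [le_inv_comm₀ one_pos h0]; simpa using hle
      rw [max_eq_right h1, max_eq_left hle,
        mul_inv_cancel₀ h0.ne']
    · have h1 : (‖α‖)⁻¹ ≤ 1 := by
        rw [inv_le_one_iff₀]; right; exact hle
      rw [max_eq_left h1, max_eq_right hle, mul_one]

lemma prod_X_sub_C_ne_zero (s : Multiset ℂ) :
    (s.map (fun α => X - C α)).prod ≠ 0 :=
  (monic_multiset_prod_of_monic s _ (fun α _ => monic_X_sub_C α)).ne_zero

lemma Mc_prod (s : Multiset ℂ) :
    Mc ((s.map (fun α => X - C α)).prod) = (s.map (fun α => max 1 (‖α‖))).prod := by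
  induction s using Multiset.induction_on with
  | empty => simp [Mc]
  | cons α s ih =>
    rw [Multiset.map_cons, Multiset.prod_cons, Multiset.map_cons, Multiset.prod_cons,
      Mc_mul (X_sub_C_ne_zero α) (prod_X_sub_C_ne_zero s), Mc_X_sub_C, ih]

lemma Mc_reverse_prod (s : Multiset ℂ) :
    Mc ((s.map (fun α => X - C α)).prod).reverse
      = (s.map (fun α => max 1 (‖α‖))).prod := by
  induction s using Multiset.induction_on with
  | empty => simp [Mc, reverse_one]
  | cons α s ih =>
    rw [Multiset.map_cons, Multiset.prod_cons, reverse_mul_of_domain,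
      Multiset.map_cons, Multiset.prod_cons,
      Mc_mul (by rw [Ne, reverse_eq_zero]; exact X_sub_C_ne_zero α)
        (by rw [Ne, reverse_eq_zero]; exact prod_X_sub_C_ne_zero s),
      Mc_reverse_X_sub_C, ih]

lemma Mc_reverse {p : Polynomial ℂ} (hp : p ≠ 0) : Mc p.reverse = Mc p := by
  have hsplit : Splits p := IsAlgClosed.splits p
  have hroots : Multiset.card p.roots = p.natDegree :=
    (splits_iff_card_roots).mp hsplit
  have hfac := (C_leadingCoeff_mul_prod_multiset_X_sub_C hroots).symm
  have ha : p.leadingCoeff ≠ 0 := leadingCoeff_ne_zero.mpr hp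
  calc Mc p.reverse
      = Mc (C p.leadingCoeff * (p.roots.map (fun α => X - C α)).prod).reverse := by rw [← hfac]
    _ = Mc (C p.leadingCoeff * ((p.roots.map (fun α => X - C α)).prod).reverse) := by
        rw [reverse_mul_of_domain, reverse_C]
    _ = ‖p.leadingCoeff‖ * (p.roots.map (fun α => max 1 (‖α‖))).prod := by
        rw [Mc_mul (by simpa using ha)
          (by rw [Ne, reverse_eq_zero]; exact prod_X_sub_C_ne_zero _), Mc_C, Mc_reverse_prod]
    _ = Mc p := by
        rw [← Mc_prod, ← Mc_C, ← Mc_mul (by simpa using ha) (prod_X_sub_C_ne_zero _), ← hfac]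

lemma reverse_map (p : Polynomial ℝ) :
    (p.reverse.map (algebraMap ℝ ℂ)) = (p.map (algebraMap ℝ ℂ)).reverse := by
  unfold Polynomial.reverse
  rw [reflect_map, natDegree_map_eq_of_injective (algebraMap ℝ ℂ).injective]

lemma mahlerMeasure_eq_Mc (f : Polynomial ℝ) :
    mahlerMeasure f = Mc (f.map (algebraMap ℝ ℂ)) := rfl

/-- Two nonzero real polynomials in the same Hillar class have the same Mahler measure. -/
theorem stmt_3 (f g u v : Polynomial ℝ) (hf : f ≠ 0) (hg : g ≠ 0)
    (hu : u ≠ 0) (hv : v ≠ 0) (ε₁ ε₂ : ℝ) (k₁ k₂ : ℕ)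
    (hε₁ : ε₁ = 1 ∨ ε₁ = -1) (hε₂ : ε₂ = 1 ∨ ε₂ = -1)
    (hfd : f = Polynomial.C ε₁ * X ^ k₁ * u * v)
    (hgd : g = Polynomial.C ε₂ * X ^ k₂ * u * v.reverse) :
    mahlerMeasure f = mahlerMeasure g := by
  have hinj : Function.Injective (Polynomial.map (algebraMap ℝ ℂ)) :=
    fun p q h => Polynomial.map_injective _ (algebraMap ℝ ℂ).injective h
  have hmapne : ∀ p : Polynomial ℝ, p ≠ 0 → p.map (algebraMap ℝ ℂ) ≠ 0 := by
    intro p hp h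
    exact hp (by simpa using hinj (by simpa using h))
  have hu' := hmapne u hu
  have hv' := hmapne v hv
  have hε₁' : ε₁ ≠ 0 := by rcases hε₁ with h | h <;> simp [h]
  have hε₂' : ε₂ ≠ 0 := by rcases hε₂ with h | h <;> simp [h]
  have habs : ∀ ε : ℝ, (ε = 1 ∨ ε = -1) → ‖algebraMap ℝ ℂ ε‖ = 1 := by
    rintro ε (rfl | rfl) <;> simp
  have key : ∀ (ε : ℝ) (hε : ε = 1 ∨ ε = -1) (k : ℕ) (w : Polynomial ℝ) (hw : w ≠ 0),
      _root_.mahlerMeasure (Polynomial.C ε * X ^ k * u * w)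
        = Mc (u.map (algebraMap ℝ ℂ)) * Mc (w.map (algebraMap ℝ ℂ)) := by
    intro ε hε k w hw
    have hε0 : ε ≠ 0 := by rcases hε with h | h <;> simp [h]
    have hw' := hmapne w hw
    rw [mahlerMeasure_eq_Mc, Polynomial.map_mul, Polynomial.map_mul, Polynomial.map_mul,
      Polynomial.map_pow, Polynomial.map_C, Polynomial.map_X,
      Mc_mul (mul_ne_zero (mul_ne_zero (by simpa using hε0) (pow_ne_zero _ X_ne_zero)) hu') hw',
      Mc_mul (mul_ne_zero (by simpa using hε0) (pow_ne_zero _ X_ne_zero)) hu',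
      Mc_mul (by simpa using hε0) (pow_ne_zero _ X_ne_zero),
      Mc_C, Mc_X_pow, habs ε hε]
    ring
  rw [hfd, hgd, key ε₁ hε₁ k₁ v hv,
    key ε₂ hε₂ k₂ v.reverse (by rw [Ne, reverse_eq_zero]; exact hv),
    reverse_map, Mc_reverse hv']
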